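/- For integers m ≥ 8 and n > m, g_m(n) := Γ(n/2)·exp(n/m) / (Γ(m/2)·Γ((n−m)/2)·2^{n/2}) satisfies g_m(n) < 2.5·√m. -/

import Mathlib

open Real

namespace GLT

noncomputable def g (m n : ℝ) : ℝ :=
  Gamma (n / 2) * Real.exp (n / m) /
    (Gamma (m / 2) * Gamma ((n - m) / 2) * 2 ^ (n / 2))

lemma g_pos {m n : ℝ} (hm : 0 < m) (hn : m < n) : 0 < g m n := by
  have h1 : 0 < Gamma (n / 2) := Gamma_pos_of_pos (by linarith)
  have h2 : 0 < Gamma (m / 2) := Gamma_pos_of_pos (by linarith)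
  have h3 : 0 < Gamma ((n - m) / 2) := Gamma_pos_of_pos (by linarith)
  have h4 : (0:ℝ) < 2 ^ (n / 2) := rpow_pos_of_pos two_pos _
  exact div_pos (mul_pos h1 (exp_pos _)) (by positivity)

lemma holder_sq {u v : ℝ} (hu : 0 < u) (hv : 0 < v) :
    Gamma ((u + v) / 2) ^ 2 ≤ Gamma u * Gamma v := by
  have h := Gamma_mul_add_mul_le_rpow_Gamma_mul_rpow_Gamma hu hv
    (a := 1/2) (b := 1/2) (by norm_num) (by norm_num) (by norm_num)
  have e : (1/2 : ℝ) * u + (1/2) * v = (u + v) / 2 := by ring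
  rw [e] at h
  have hGu : 0 ≤ Gamma u := (Gamma_pos_of_pos hu).le
  have hGv : 0 ≤ Gamma v := (Gamma_pos_of_pos hv).le
  have h2 : (Gamma u ^ (1/2 : ℝ) * Gamma v ^ (1/2 : ℝ)) ^ 2 = Gamma u * Gamma v := by
    rw [mul_pow, ← rpow_natCast (Gamma u ^ (1/2:ℝ)) 2, ← rpow_natCast (Gamma v ^ (1/2:ℝ)) 2,
      ← rpow_mul hGu, ← rpow_mul hGv]
    norm_num
  calc Gamma ((u + v) / 2) ^ 2 ≤ (Gamma u ^ (1/2:ℝ) * Gamma v ^ (1/2:ℝ)) ^ 2 := by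
        apply pow_le_pow_left₀ (Gamma_pos_of_pos (by linarith)).le h
    _ = Gamma u * Gamma v := h2

lemma half_up_sq {x : ℝ} (hx : 0 < x) : Gamma (x + 1/2) ^ 2 ≤ Gamma x ^ 2 * x := by
  have h := holder_sq hx (show (0:ℝ) < x + 1 by linarith)
  have e : (x + (x + 1)) / 2 = x + 1/2 := by ring
  rw [e, Gamma_add_one hx.ne'] at h
  nlinarith [h]

lemma half_down_sq {x : ℝ} (hx : 1/2 < x) :
    Gamma x ^ 2 * (x - 1/2) ≤ Gamma (x + 1/2) ^ 2 := by
  have hx0 : (0:ℝ) < x - 1/2 := by linarith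
  have h := holder_sq hx0 (show (0:ℝ) < x + 1/2 by linarith)
  have e : ((x - 1/2) + (x + 1/2)) / 2 = x := by ring
  rw [e] at h
  have e2 : Gamma (x + 1/2) = (x - 1/2) * Gamma (x - 1/2) := by
    rw [show x + 1/2 = (x - 1/2) + 1 by ring, Gamma_add_one hx0.ne']
  have hG : 0 < Gamma (x - 1/2) := Gamma_pos_of_pos hx0
  rw [e2] at h ⊢
  nlinarith [mul_le_mul_of_nonneg_right h hx0.le]

lemma g_dup {m n : ℝ} (hm : 0 < m) (hn : m < n) :
    g m n = Gamma (n / 4) * Gamma (n / 4 + 1 / 2) * Real.exp (n / m) /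
      (2 * Real.sqrt π * Gamma (m / 2) * Gamma ((n - m) / 2)) := by
  have hn0 : 0 < n := by linarith
  have hs : 0 < n / 4 := by linarith
  have hdup := Gamma_mul_Gamma_add_half_of_pos hs
  have e1 : 2 * (n / 4) = n / 2 := by ring
  rw [e1] at hdup
  have h2 : (0:ℝ) < 2 ^ (n / 2) := rpow_pos_of_pos two_pos _
  have hpi : (0:ℝ) < Real.sqrt π := sqrt_pos.mpr pi_pos
  have hgm : 0 < Gamma (m / 2) := Gamma_pos_of_pos (by linarith)
  have hgnm : 0 < Gamma ((n - m) / 2) := Gamma_pos_of_pos (by linarith)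
  have key : Gamma (n / 4) * Gamma (n / 4 + 1 / 2) * 2 ^ (n / 2)
      = Gamma (n / 2) * 2 * Real.sqrt π := by
    rw [hdup]
    have h3 : (2:ℝ) ^ (1 - n / 2) * 2 ^ (n / 2) = 2 := by
      rw [← rpow_add two_pos]; norm_num
    calc Gamma (n / 2) * 2 ^ (1 - n / 2) * √π * 2 ^ (n / 2)
        = Gamma (n / 2) * √π * (2 ^ (1 - n / 2) * 2 ^ (n / 2)) := by ring
      _ = Gamma (n / 2) * 2 * √π := by rw [h3]; ring
  unfold g
  rw [div_eq_div_iff (by positivity) (by positivity)]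
  calc Gamma (n / 2) * rexp (n / m) * (2 * √π * Gamma (m / 2) * Gamma ((n - m) / 2))
      = (Gamma (n / 2) * 2 * √π) * rexp (n / m) * (Gamma (m / 2) * Gamma ((n - m) / 2)) := by
        ring
    _ = Gamma (n / 4) * Gamma (n / 4 + 1 / 2) * 2 ^ (n / 2) * rexp (n / m)
          * (Gamma (m / 2) * Gamma ((n - m) / 2)) := by rw [key]
    _ = _ := by ring

lemma g_rec {m n : ℝ} (hm : 0 < m) (hn : m < n) :
    g m (n + 2) = g m n * (n * Real.exp (2 / m) / (2 * (n - m))) := by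
  have hn0 : 0 < n := by linarith
  have h1 : Gamma ((n + 2) / 2) = (n / 2) * Gamma (n / 2) := by
    rw [show (n + 2) / 2 = n / 2 + 1 by ring, Gamma_add_one (by positivity)]
  have hnm : (0:ℝ) < (n - m) / 2 := by linarith
  have h2 : Gamma ((n + 2 - m) / 2) = ((n - m) / 2) * Gamma ((n - m) / 2) := by
    rw [show (n + 2 - m) / 2 = (n - m) / 2 + 1 by ring, Gamma_add_one hnm.ne']
  have h3 : Real.exp ((n + 2) / m) = Real.exp (n / m) * Real.exp (2 / m) := by
    rw [← Real.exp_add]; congr 1; field_simp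
  have h4 : (2:ℝ) ^ ((n + 2) / 2) = 2 ^ (n / 2) * 2 := by
    rw [show (n + 2) / 2 = n / 2 + 1 by ring, rpow_add two_pos, rpow_one]
  have hgm : Gamma (m / 2) ≠ 0 := (Gamma_pos_of_pos (by linarith)).ne'
  have hgnm : Gamma ((n - m) / 2) ≠ 0 := (Gamma_pos_of_pos hnm).ne'
  have hp : (2:ℝ) ^ (n / 2) ≠ 0 := (rpow_pos_of_pos two_pos _).ne'
  have hnm0 : n - m ≠ 0 := by linarith
  unfold g
  rw [h1, h2, h3, h4]
  field_simp

lemma chord {x c : ℝ} (hx : 0 ≤ x) (hxc : x ≤ c) (hc : 0 < c) :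
    Real.exp x ≤ 1 + (Real.exp c - 1) / c * x := by
  have hd1 : (0:ℝ) ≤ 1 - x / c := by
    have : x / c ≤ 1 := (div_le_one hc).mpr hxc
    linarith
  have h := convexOn_exp.2 (Set.mem_univ (0:ℝ)) (Set.mem_univ c)
    hd1 (by positivity : (0:ℝ) ≤ x / c) (by ring)
  simp only [smul_eq_mul, mul_zero, zero_add, Real.exp_zero] at h
  have e : x / c * c = x := by field_simp
  rw [e] at h
  calc Real.exp x ≤ (1 - x / c) * 1 + x / c * Real.exp c := h
    _ = 1 + (Real.exp c - 1) / c * x := by field_simp; ring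

lemma assemble {N E D B P Q : ℝ} (hN : 0 ≤ N) (hE : 0 < E) (hD : 0 < D) (hB : 0 < B)
    (h1 : N ^ 2 ≤ P) (h2 : Q ≤ D ^ 2) (h3 : P * E ^ 2 < B ^ 2 * Q) :
    N * E / D < B := by
  rw [div_lt_iff₀ hD]
  have h4 : (N * E) ^ 2 < (B * D) ^ 2 := by
    calc (N * E) ^ 2 = N ^ 2 * E ^ 2 := by ring
      _ ≤ P * E ^ 2 := by nlinarith [sq_nonneg E]
      _ < B ^ 2 * Q := h3
      _ ≤ B ^ 2 * D ^ 2 := by nlinarith [sq_nonneg B]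
      _ = (B * D) ^ 2 := by ring
  exact lt_of_pow_lt_pow_left₀ 2 (by positivity) h4

lemma exp_one_le : Real.exp 1 ≤ 2.7182818286 := Real.exp_one_lt_d9.le

lemma exp4_le : Real.exp 4 ≤ 54.5982 := by
  have h : Real.exp 4 = Real.exp 1 ^ (4:ℕ) := by
    rw [← Real.exp_nat_mul]; norm_num
  rw [h]
  calc Real.exp 1 ^ (4:ℕ) ≤ 2.7182818286 ^ (4:ℕ) :=
        pow_le_pow_left₀ (Real.exp_pos 1).le exp_one_le 4
    _ ≤ 54.5982 := by norm_num

lemma exp_frac_le {q r : ℝ} (k l : ℕ) (hl : l ≠ 0) (hq : q = k / l) (hr : 0 ≤ r)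
    (hb : 2.7182818286 ^ k ≤ r ^ l) : Real.exp q ≤ r := by
  apply le_of_pow_le_pow_left₀ hl hr
  have h : Real.exp q ^ (l:ℕ) = Real.exp 1 ^ (k:ℕ) := by
    rw [← Real.exp_nat_mul, ← Real.exp_nat_mul, hq, mul_one]
    congr 1
    field_simp
  rw [h]
  calc Real.exp 1 ^ k ≤ 2.7182818286 ^ k :=
        pow_le_pow_left₀ (Real.exp_pos 1).le exp_one_le k
    _ ≤ r ^ l := hb

lemma exp54_le : Real.exp (5/4) ≤ 3.4904 :=
  exp_frac_le 5 4 (by norm_num) (by norm_num) (by norm_num) (by norm_num)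

lemma exp32_le : Real.exp (3/2) ≤ 4.4818 :=
  exp_frac_le 3 2 (by norm_num) (by norm_num) (by norm_num) (by norm_num)

lemma exp74_le : Real.exp (7/4) ≤ 5.7547 :=
  exp_frac_le 7 4 (by norm_num) (by norm_num) (by norm_num) (by norm_num)

lemma exp2_le : Real.exp 2 ≤ 7.3891 :=
  exp_frac_le 2 1 (by norm_num) (by norm_num) (by norm_num) (by norm_num)

lemma exp94_le : Real.exp (9/4) ≤ 9.4878 :=
  exp_frac_le 9 4 (by norm_num) (by norm_num) (by norm_num) (by norm_num)

lemma exp52_le : Real.exp (5/2) ≤ 12.183 :=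
  exp_frac_le 5 2 (by norm_num) (by norm_num) (by norm_num) (by norm_num)

lemma aexp_le {a k r : ℝ} (ha : 4 ≤ a) (hk : 0 < k) (he : Real.exp (k/4) ≤ r) :
    a * Real.exp (k / a) ≤ a + 4 * (r - 1) := by
  have ha0 : (0:ℝ) < a := by linarith
  have hch := chord (x := k/a) (c := k/4) (by positivity)
    (by rw [div_le_div_iff₀ ha0 (by norm_num)]; nlinarith) (by positivity)
  calc a * Real.exp (k/a) ≤ a * (1 + (Real.exp (k/4) - 1)/(k/4) * (k/a)) :=
        mul_le_mul_of_nonneg_left hch ha0.le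
    _ = a + 4 * (Real.exp (k/4) - 1) := by field_simp
    _ ≤ a + 4 * (r - 1) := by linarith

lemma climb {m n : ℝ} (hm : 0 < m) (hn : m < n) (h4 : n ≤ 2 * m + 4) :
    g m n ≤ g m (n + 2) := by
  rw [g_rec hm hn]
  apply le_mul_of_one_le_right (g_pos hm hn).le
  rw [le_div_iff₀ (by linarith)]
  have he : 1 + 2 / m ≤ Real.exp (2 / m) := by
    have := Real.add_one_le_exp (2 / m); linarith
  have hexp : n * (1 + 2 / m) ≤ n * Real.exp (2 / m) :=
    mul_le_mul_of_nonneg_left he (by linarith)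
  have key : 2 * (n - m) ≤ n * (1 + 2 / m) := by
    have e : n * (1 + 2 / m) = n + 2 * n / m := by field_simp
    rw [e]
    rcases le_or_gt n (2 * m) with h | h
    · have : 0 < 2 * n / m := div_pos (by linarith) hm
      linarith
    · have : (4:ℝ) ≤ 2 * n / m := by
        rw [le_div_iff₀ hm]; linarith
      linarith
  linarith

lemma descend {m n : ℝ} (hm : 8 ≤ m) (hn : 2 * m + 9 ≤ n) :
    g m (n + 2) ≤ g m n := by
  have hm0 : 0 < m := by linarith
  have hmn : m < n := by linarith
  rw [g_rec hm0 hmn]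
  apply mul_le_of_le_one_right (g_pos hm0 hmn).le
  rw [div_le_one (by linarith)]
  have hm2 : 0 < 1 - 2 / m := by
    have : 2 / m ≤ 2 / 8 := by
      apply div_le_div_of_nonneg_left (by norm_num) (by norm_num) hm
    linarith
  have he : Real.exp (2 / m) ≤ m / (m - 2) := by
    have h1 : 1 - 2 / m ≤ Real.exp (-(2 / m)) := by
      have := Real.add_one_le_exp (-(2 / m)); linarith
    have h2 : Real.exp (2 / m) = 1 / Real.exp (-(2 / m)) := by
      rw [Real.exp_neg]; field_simp
    rw [h2]
    calc 1 / Real.exp (-(2 / m)) ≤ 1 / (1 - 2 / m) := by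
          apply one_div_le_one_div_of_le hm2 h1
      _ = m / (m - 2) := by
          rw [show 1 - 2 / m = (m - 2) / m by field_simp]
          rw [one_div_div]
  calc n * Real.exp (2 / m) ≤ n * (m / (m - 2)) :=
        mul_le_mul_of_nonneg_left he (by linarith)
    _ ≤ 2 * (n - m) := by
        rw [← mul_div_assoc, div_le_iff₀ (show (0:ℝ) < m - 2 by linarith)]
        nlinarith [(show (0:ℝ) ≤ (n - (2*m+9)) * (m - 4) by nlinarith)]

lemma core5 {a : ℝ} (ha : 4 ≤ a) :
    a * (Real.exp 4 * Real.exp (5 / a)) < 50 * π * (a + 3/2) := by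
  have ha0 : (0:ℝ) < a := by linarith
  have h1 : a * Real.exp (5 / a) ≤ a + 9.9616 := by
    have h := aexp_le ha (k := 5) (by norm_num) (r := 3.4904) exp54_le
    linarith
  have h3 : Real.exp 4 * (a * Real.exp (5 / a)) ≤ 54.5982 * (a + 9.9616) :=
    mul_le_mul exp4_le h1 (by positivity) (by norm_num)
  have h4 : 54.5982 * (a + 9.9616) < 50 * π * (a + 3/2) := by
    nlinarith [pi_gt_d6]
  calc a * (Real.exp 4 * Real.exp (5 / a)) = Real.exp 4 * (a * Real.exp (5 / a)) := by ring
    _ ≤ 54.5982 * (a + 9.9616) := h3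
    _ < 50 * π * (a + 3/2) := h4

lemma peak5 {m : ℝ} (hm : 8 ≤ m) : g m (2 * m + 5) < 2.5 * Real.sqrt m := by
  obtain ⟨a, rfl⟩ : ∃ a, m = 2 * a := ⟨m / 2, by ring⟩
  have ha : 4 ≤ a := by linarith
  have ha0 : (0:ℝ) < a := by linarith
  have hGa : 0 < Gamma a := Gamma_pos_of_pos ha0
  rw [g_dup (by linarith) (by linarith)]
  rw [show (2 * (2 * a) + 5) / 4 = a + 5/4 by ring,
    show (a + 5/4) + 1/2 = a + 7/4 by ring,
    show (2 * (2 * a) + 5 - 2 * a) / 2 = a + 5/2 by ring,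
    show (2 * a) / 2 = a by ring]
  have hG1 : Gamma (a + 1) = a * Gamma a := Gamma_add_one ha0.ne'
  have hG2 : Gamma (a + 2) = (a + 1) * (a * Gamma a) := by
    rw [show a + 2 = (a + 1) + 1 by ring, Gamma_add_one (by linarith), hG1]
  have hh1 : Gamma (a + 5/4) ^ 2 ≤ Gamma (a + 1) * Gamma (a + 3/2) := by
    have h := holder_sq (u := a + 1) (v := a + 3/2) (by linarith) (by linarith)
    rwa [show ((a + 1) + (a + 3/2)) / 2 = a + 5/4 by ring] at h
  have hh2 : Gamma (a + 7/4) ^ 2 ≤ Gamma (a + 3/2) * Gamma (a + 2) := by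
    have h := holder_sq (u := a + 3/2) (v := a + 2) (by linarith) (by linarith)
    rwa [show ((a + 3/2) + (a + 2)) / 2 = a + 7/4 by ring] at h
  have hh3 : Gamma (a + 3/2) ^ 2 ≤ Gamma (a + 1) ^ 2 * (a + 1) := by
    have h := half_up_sq (x := a + 1) (by linarith)
    rwa [show (a + 1) + 1/2 = a + 3/2 by ring] at h
  have hh4 : Gamma (a + 2) ^ 2 * (a + 3/2) ≤ Gamma (a + 5/2) ^ 2 := by
    have h := half_down_sq (x := a + 2) (by linarith)
    rwa [show (a + 2) + 1/2 = a + 5/2 by ring, show (a + 2) - 1/2 = a + 3/2 by ring] at h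
  have hg32 : 0 < Gamma (a + 3/2) := Gamma_pos_of_pos (by linarith)
  have hg1 : 0 < Gamma (a + 1) := Gamma_pos_of_pos (by linarith)
  have hg2 : 0 < Gamma (a + 2) := Gamma_pos_of_pos (by linarith)
  have hg52 : 0 < Gamma (a + 5/2) := Gamma_pos_of_pos (by linarith)
  have hg54 : 0 < Gamma (a + 5/4) := Gamma_pos_of_pos (by linarith)
  have hg74 : 0 < Gamma (a + 7/4) := Gamma_pos_of_pos (by linarith)
  have hsp : (0:ℝ) < Real.sqrt π := sqrt_pos.mpr pi_pos
  apply assemble (P := a^4 * (a+1)^2 * Gamma a ^ 4)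
    (Q := 4 * π * (a^2 * (a+1)^2 * (a + 3/2)) * Gamma a ^ 4)
    (mul_pos hg54 hg74).le (exp_pos _)
    (by positivity) (by positivity)
  · calc (Gamma (a + 5/4) * Gamma (a + 7/4)) ^ 2
        = Gamma (a + 5/4) ^ 2 * Gamma (a + 7/4) ^ 2 := by ring
      _ ≤ (Gamma (a + 1) * Gamma (a + 3/2)) * (Gamma (a + 3/2) * Gamma (a + 2)) :=
          mul_le_mul hh1 hh2 (sq_nonneg _) (mul_nonneg hg1.le hg32.le)
      _ = Gamma (a + 3/2) ^ 2 * (Gamma (a + 1) * Gamma (a + 2)) := by ring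
      _ ≤ (Gamma (a + 1) ^ 2 * (a + 1)) * (Gamma (a + 1) * Gamma (a + 2)) :=
          mul_le_mul_of_nonneg_right hh3 (mul_nonneg hg1.le hg2.le)
      _ = a^4 * (a+1)^2 * Gamma a ^ 4 := by rw [hG1, hG2]; ring
  · calc 4 * π * (a^2 * (a+1)^2 * (a + 3/2)) * Gamma a ^ 4
        = 4 * π * Gamma a ^ 2 * (Gamma (a + 2) ^ 2 * (a + 3/2)) := by rw [hG2]; ring
      _ ≤ 4 * π * Gamma a ^ 2 * Gamma (a + 5/2) ^ 2 :=
          mul_le_mul_of_nonneg_left hh4 (by positivity)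
      _ = (2 * Real.sqrt π * Gamma a * Gamma (a + 5/2)) ^ 2 := by
          rw [show (2 * Real.sqrt π * Gamma a * Gamma (a + 5/2)) ^ 2
            = 4 * (Real.sqrt π ^ 2) * Gamma a ^ 2 * Gamma (a + 5/2) ^ 2 by ring,
            sq_sqrt pi_pos.le]
  · have hE2 : Real.exp ((2 * (2 * a) + 5) / (2 * a)) ^ 2 = Real.exp 4 * Real.exp (5 / a) := by
      rw [sq, ← Real.exp_add, ← Real.exp_add]
      congr 1
      field_simp
      ring
    have hB2 : (2.5 * Real.sqrt (2 * a)) ^ 2 = 12.5 * a := by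
      rw [mul_pow, sq_sqrt (by linarith : (0:ℝ) ≤ 2 * a)]
      norm_num
      ring
    rw [hE2, hB2]
    have hpos : (0:ℝ) < a^3 * (a+1)^2 * Gamma a ^ 4 := by positivity
    calc a^4 * (a+1)^2 * Gamma a ^ 4 * (Real.exp 4 * Real.exp (5 / a))
        = (a^3 * (a+1)^2 * Gamma a ^ 4) * (a * (Real.exp 4 * Real.exp (5 / a))) := by ring
      _ < (a^3 * (a+1)^2 * Gamma a ^ 4) * (50 * π * (a + 3/2)) :=
          (mul_lt_mul_iff_right₀ hpos).mpr (core5 ha)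
      _ = 12.5 * a * (4 * π * (a^2 * (a+1)^2 * (a + 3/2)) * Gamma a ^ 4) := by ring

lemma core6 {a : ℝ} (ha : 4 ≤ a) :
    (a * (a + 1)) * (Real.exp 4 * Real.exp (6 / a)) < 50 * π * ((a + 2) ^ 2) := by
  have ha0 : (0:ℝ) < a := by linarith
  have h1 : a * Real.exp (6 / a) ≤ a + 13.9272 := by
    have h := aexp_le ha (k := 6) (by norm_num) (r := 4.4818) (by rw [show (6:ℝ)/4 = 3/2 by norm_num]; exact exp32_le)
    linarith
  have h2 : Real.exp 4 * (a * Real.exp (6 / a)) ≤ 54.5982 * (a + 13.9272) :=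
    mul_le_mul exp4_le h1 (by positivity) (by norm_num)
  have hpi : (50:ℝ) * 3.141592 * ((a + 2) ^ 2) ≤ 50 * π * ((a + 2) ^ 2) := by
    have h3 : (3.141592:ℝ) ≤ π := pi_gt_d6.le
    have h4 : (0:ℝ) ≤ ((a + 2) ^ 2) := by positivity
    nlinarith
  have hb : (0:ℝ) ≤ a - 4 := by linarith
  calc (a * (a + 1)) * (Real.exp 4 * Real.exp (6 / a))
      = (a + 1) * (Real.exp 4 * (a * Real.exp (6 / a))) := by ring
    _ ≤ (a + 1) * (54.5982 * (a + 13.9272)) :=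
        mul_le_mul_of_nonneg_left h2 (by positivity)
    _ < 50 * 3.141592 * ((a + 2) ^ 2) := by
        nlinarith [sq_nonneg (a - 4), pow_nonneg hb 3, pow_nonneg hb 4, mul_nonneg (mul_nonneg hb hb) hb]
    _ ≤ 50 * π * ((a + 2) ^ 2) := hpi


lemma core7 {a : ℝ} (ha : 4 ≤ a) :
    (a * (a + 1) * (a + 3/2)) * (Real.exp 4 * Real.exp (7 / a)) < 50 * π * ((a + 2) ^ 2 * (a + 5/2)) := by
  have ha0 : (0:ℝ) < a := by linarith
  have h1 : a * Real.exp (7 / a) ≤ a + 19.0188 := by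
    have h := aexp_le ha (k := 7) (by norm_num) (r := 5.7547) exp74_le
    linarith
  have h2 : Real.exp 4 * (a * Real.exp (7 / a)) ≤ 54.5982 * (a + 19.0188) :=
    mul_le_mul exp4_le h1 (by positivity) (by norm_num)
  have hpi : (50:ℝ) * 3.141592 * ((a + 2) ^ 2 * (a + 5/2)) ≤ 50 * π * ((a + 2) ^ 2 * (a + 5/2)) := by
    have h3 : (3.141592:ℝ) ≤ π := pi_gt_d6.le
    have h4 : (0:ℝ) ≤ ((a + 2) ^ 2 * (a + 5/2)) := by positivity
    nlinarith
  have hb : (0:ℝ) ≤ a - 4 := by linarith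
  calc (a * (a + 1) * (a + 3/2)) * (Real.exp 4 * Real.exp (7 / a))
      = ((a + 1) * (a + 3/2)) * (Real.exp 4 * (a * Real.exp (7 / a))) := by ring
    _ ≤ ((a + 1) * (a + 3/2)) * (54.5982 * (a + 19.0188)) :=
        mul_le_mul_of_nonneg_left h2 (by positivity)
    _ < 50 * 3.141592 * ((a + 2) ^ 2 * (a + 5/2)) := by
        nlinarith [sq_nonneg (a - 4), pow_nonneg hb 3, pow_nonneg hb 4, mul_nonneg (mul_nonneg hb hb) hb]
    _ ≤ 50 * π * ((a + 2) ^ 2 * (a + 5/2)) := hpi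


lemma core8 {a : ℝ} (ha : 4 ≤ a) :
    (a * (a + 1) ^ 2) * (Real.exp 4 * Real.exp (8 / a)) < 50 * π * ((a + 2) * (a + 3) ^ 2) := by
  have ha0 : (0:ℝ) < a := by linarith
  have h1 : a * Real.exp (8 / a) ≤ a + 25.5564 := by
    have h := aexp_le ha (k := 8) (by norm_num) (r := 7.3891) (by rw [show (8:ℝ)/4 = 2 by norm_num]; exact exp2_le)
    linarith
  have h2 : Real.exp 4 * (a * Real.exp (8 / a)) ≤ 54.5982 * (a + 25.5564) :=
    mul_le_mul exp4_le h1 (by positivity) (by norm_num)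
  have hpi : (50:ℝ) * 3.141592 * ((a + 2) * (a + 3) ^ 2) ≤ 50 * π * ((a + 2) * (a + 3) ^ 2) := by
    have h3 : (3.141592:ℝ) ≤ π := pi_gt_d6.le
    have h4 : (0:ℝ) ≤ ((a + 2) * (a + 3) ^ 2) := by positivity
    nlinarith
  have hb : (0:ℝ) ≤ a - 4 := by linarith
  calc (a * (a + 1) ^ 2) * (Real.exp 4 * Real.exp (8 / a))
      = ((a + 1) ^ 2) * (Real.exp 4 * (a * Real.exp (8 / a))) := by ring
    _ ≤ ((a + 1) ^ 2) * (54.5982 * (a + 25.5564)) :=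
        mul_le_mul_of_nonneg_left h2 (by positivity)
    _ < 50 * 3.141592 * ((a + 2) * (a + 3) ^ 2) := by
        nlinarith [sq_nonneg (a - 4), pow_nonneg hb 3, pow_nonneg hb 4, mul_nonneg (mul_nonneg hb hb) hb]
    _ ≤ 50 * π * ((a + 2) * (a + 3) ^ 2) := hpi


lemma core9 {a : ℝ} (ha : 4 ≤ a) :
    (a * (a + 1) ^ 2) * (Real.exp 4 * Real.exp (9 / a)) < 50 * π * ((a + 3) ^ 2 * (a + 7/2)) := by
  have ha0 : (0:ℝ) < a := by linarith
  have h1 : a * Real.exp (9 / a) ≤ a + 33.9512 := by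
    have h := aexp_le ha (k := 9) (by norm_num) (r := 9.4878) exp94_le
    linarith
  have h2 : Real.exp 4 * (a * Real.exp (9 / a)) ≤ 54.5982 * (a + 33.9512) :=
    mul_le_mul exp4_le h1 (by positivity) (by norm_num)
  have hpi : (50:ℝ) * 3.141592 * ((a + 3) ^ 2 * (a + 7/2)) ≤ 50 * π * ((a + 3) ^ 2 * (a + 7/2)) := by
    have h3 : (3.141592:ℝ) ≤ π := pi_gt_d6.le
    have h4 : (0:ℝ) ≤ ((a + 3) ^ 2 * (a + 7/2)) := by positivity
    nlinarith
  have hb : (0:ℝ) ≤ a - 4 := by linarith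
  calc (a * (a + 1) ^ 2) * (Real.exp 4 * Real.exp (9 / a))
      = ((a + 1) ^ 2) * (Real.exp 4 * (a * Real.exp (9 / a))) := by ring
    _ ≤ ((a + 1) ^ 2) * (54.5982 * (a + 33.9512)) :=
        mul_le_mul_of_nonneg_left h2 (by positivity)
    _ < 50 * 3.141592 * ((a + 3) ^ 2 * (a + 7/2)) := by
        nlinarith [sq_nonneg (a - 4), pow_nonneg hb 3, pow_nonneg hb 4, mul_nonneg (mul_nonneg hb hb) hb]
    _ ≤ 50 * π * ((a + 3) ^ 2 * (a + 7/2)) := hpi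


lemma core10 {a : ℝ} (ha : 4 ≤ a) :
    (a * (a + 1) ^ 2 * (a + 2)) * (Real.exp 4 * Real.exp (10 / a)) < 50 * π * ((a + 3) ^ 2 * (a + 4) ^ 2) := by
  have ha0 : (0:ℝ) < a := by linarith
  have h1 : a * Real.exp (10 / a) ≤ a + 44.732 := by
    have h := aexp_le ha (k := 10) (by norm_num) (r := 12.183) (by rw [show (10:ℝ)/4 = 5/2 by norm_num]; exact exp52_le)
    linarith
  have h2 : Real.exp 4 * (a * Real.exp (10 / a)) ≤ 54.5982 * (a + 44.732) :=
    mul_le_mul exp4_le h1 (by positivity) (by norm_num)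
  have hpi : (50:ℝ) * 3.141592 * ((a + 3) ^ 2 * (a + 4) ^ 2) ≤ 50 * π * ((a + 3) ^ 2 * (a + 4) ^ 2) := by
    have h3 : (3.141592:ℝ) ≤ π := pi_gt_d6.le
    have h4 : (0:ℝ) ≤ ((a + 3) ^ 2 * (a + 4) ^ 2) := by positivity
    nlinarith
  have hb : (0:ℝ) ≤ a - 4 := by linarith
  calc (a * (a + 1) ^ 2 * (a + 2)) * (Real.exp 4 * Real.exp (10 / a))
      = ((a + 1) ^ 2 * (a + 2)) * (Real.exp 4 * (a * Real.exp (10 / a))) := by ring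
    _ ≤ ((a + 1) ^ 2 * (a + 2)) * (54.5982 * (a + 44.732)) :=
        mul_le_mul_of_nonneg_left h2 (by positivity)
    _ < 50 * 3.141592 * ((a + 3) ^ 2 * (a + 4) ^ 2) := by
        nlinarith [sq_nonneg (a - 4), pow_nonneg hb 3, pow_nonneg hb 4, mul_nonneg (mul_nonneg hb hb) hb]
    _ ≤ 50 * π * ((a + 3) ^ 2 * (a + 4) ^ 2) := hpi

lemma peak6 {m : ℝ} (hm : 8 ≤ m) : g m (2 * m + 6) < 2.5 * Real.sqrt m := by
  obtain ⟨a, rfl⟩ : ∃ a, m = 2 * a := ⟨m / 2, by ring⟩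
  have ha : 4 ≤ a := by linarith
  have ha0 : (0:ℝ) < a := by linarith
  have hGa : 0 < Gamma a := Gamma_pos_of_pos ha0
  rw [g_dup (by linarith) (by linarith)]
  rw [show (2 * (2 * a) + 6) / 4 = a + 3/2 by ring,
    show (a + 3/2) + 1/2 = a + 2 by ring,
    show (2 * (2 * a) + 6 - 2 * a) / 2 = a + 3 by ring,
    show (2 * a) / 2 = a by ring]
  have hG1 : Gamma (a + 1) = a * Gamma a := Gamma_add_one ha0.ne'
  have hG2 : Gamma (a + 2) = (a + 1) * (a * Gamma a) := by
    rw [show a + 2 = (a + 1) + 1 by ring, Gamma_add_one (by linarith), hG1]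
  have hG3 : Gamma (a + 3) = (a + 2) * ((a + 1) * (a * Gamma a)) := by
    rw [show a + 3 = (a + 2) + 1 by ring, Gamma_add_one (by linarith), hG2]
  have hG4 : Gamma (a + 4) = (a + 3) * ((a + 2) * ((a + 1) * (a * Gamma a))) := by
    rw [show a + 4 = (a + 3) + 1 by ring, Gamma_add_one (by linarith), hG3]
  have hG5 : Gamma (a + 5) = (a + 4) * ((a + 3) * ((a + 2) * ((a + 1) * (a * Gamma a)))) := by
    rw [show a + 5 = (a + 4) + 1 by ring, Gamma_add_one (by linarith), hG4]
  have hg1 : 0 < Gamma (a + 1) := Gamma_pos_of_pos (by linarith)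
  have hg2 : 0 < Gamma (a + 2) := Gamma_pos_of_pos (by linarith)
  have hg3 : 0 < Gamma (a + 3) := Gamma_pos_of_pos (by linarith)
  have hg32 : 0 < Gamma (a + 3/2) := Gamma_pos_of_pos (by linarith)
  have hg52 : 0 < Gamma (a + 5/2) := Gamma_pos_of_pos (by linarith)
  have hgA : 0 < Gamma (a + 3/2) := Gamma_pos_of_pos (by linarith)
  have hgB : 0 < Gamma (a + 2) := Gamma_pos_of_pos (by linarith)
  have hgD : 0 < Gamma (a + 3) := Gamma_pos_of_pos (by linarith)
  have hsp : (0:ℝ) < Real.sqrt π := sqrt_pos.mpr pi_pos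
  have hh3 : Gamma (a + 3/2) ^ 2 ≤ Gamma (a + 1) ^ 2 * (a + 1) := by
    have h := half_up_sq (x := a + 1) (by linarith)
    rwa [show (a + 1) + 1/2 = a + 3/2 by ring] at h
  have hh5 : Gamma (a + 5/2) ^ 2 ≤ Gamma (a + 2) ^ 2 * (a + 2) := by
    have h := half_up_sq (x := a + 2) (by linarith)
    rwa [show (a + 2) + 1/2 = a + 5/2 by ring] at h
  apply assemble (P := a^4 * (a+1)^3 * Gamma a ^ 4) (Q := 4 * π * (a^2 * (a+1)^2 * (a+2)^2) * Gamma a ^ 4)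
    (mul_pos hgA hgB).le (exp_pos _) (by positivity) (by positivity)
  · calc (Gamma (a + 3/2) * Gamma (a + 2)) ^ 2
        = Gamma (a + 3/2) ^ 2 * Gamma (a + 2) ^ 2 := by ring
      _ ≤ (Gamma (a + 1) ^ 2 * (a + 1)) * Gamma (a + 2) ^ 2 :=
          mul_le_mul_of_nonneg_right hh3 (sq_nonneg _)
      _ = a^4 * (a+1)^3 * Gamma a ^ 4 := by rw [hG1, hG2]; ring
  · apply le_of_eq
    calc 4 * π * (a^2 * (a+1)^2 * (a+2)^2) * Gamma a ^ 4
        = 4 * π * Gamma a ^ 2 * Gamma (a + 3) ^ 2 := by rw [hG3]; ring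
      _ = (2 * Real.sqrt π * Gamma a * Gamma (a + 3)) ^ 2 := by
          rw [show (2 * Real.sqrt π * Gamma a * Gamma (a + 3)) ^ 2
            = 4 * (Real.sqrt π ^ 2) * Gamma a ^ 2 * Gamma (a + 3) ^ 2 by ring,
            sq_sqrt pi_pos.le]
  · have hE2 : Real.exp ((2 * (2 * a) + 6) / (2 * a)) ^ 2
        = Real.exp 4 * Real.exp (6 / a) := by
      rw [sq, ← Real.exp_add, ← Real.exp_add]
      congr 1
      field_simp
      ring
    have hB2 : (2.5 * Real.sqrt (2 * a)) ^ 2 = 12.5 * a := by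
      rw [mul_pow, sq_sqrt (by linarith : (0:ℝ) ≤ 2 * a)]
      norm_num
      ring
    rw [hE2, hB2]
    have hpos : (0:ℝ) < a^3 * (a+1)^2 * Gamma a ^ 4 := by positivity
    calc a^4 * (a+1)^3 * Gamma a ^ 4 * (Real.exp 4 * Real.exp (6 / a))
        = (a^3 * (a+1)^2 * Gamma a ^ 4) * ((a * (a + 1)) * (Real.exp 4 * Real.exp (6 / a))) := by ring
      _ < (a^3 * (a+1)^2 * Gamma a ^ 4) * (50 * π * ((a + 2) ^ 2)) :=
          (mul_lt_mul_iff_right₀ hpos).mpr (core6 ha)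
      _ = 12.5 * a * (4 * π * (a^2 * (a+1)^2 * (a+2)^2) * Gamma a ^ 4) := by ring


lemma peak7 {m : ℝ} (hm : 8 ≤ m) : g m (2 * m + 7) < 2.5 * Real.sqrt m := by
  obtain ⟨a, rfl⟩ : ∃ a, m = 2 * a := ⟨m / 2, by ring⟩
  have ha : 4 ≤ a := by linarith
  have ha0 : (0:ℝ) < a := by linarith
  have hGa : 0 < Gamma a := Gamma_pos_of_pos ha0
  rw [g_dup (by linarith) (by linarith)]
  rw [show (2 * (2 * a) + 7) / 4 = a + 7/4 by ring,
    show (a + 7/4) + 1/2 = a + 9/4 by ring,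
    show (2 * (2 * a) + 7 - 2 * a) / 2 = a + 7/2 by ring,
    show (2 * a) / 2 = a by ring]
  have hG1 : Gamma (a + 1) = a * Gamma a := Gamma_add_one ha0.ne'
  have hG2 : Gamma (a + 2) = (a + 1) * (a * Gamma a) := by
    rw [show a + 2 = (a + 1) + 1 by ring, Gamma_add_one (by linarith), hG1]
  have hG3 : Gamma (a + 3) = (a + 2) * ((a + 1) * (a * Gamma a)) := by
    rw [show a + 3 = (a + 2) + 1 by ring, Gamma_add_one (by linarith), hG2]
  have hG4 : Gamma (a + 4) = (a + 3) * ((a + 2) * ((a + 1) * (a * Gamma a))) := by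
    rw [show a + 4 = (a + 3) + 1 by ring, Gamma_add_one (by linarith), hG3]
  have hG5 : Gamma (a + 5) = (a + 4) * ((a + 3) * ((a + 2) * ((a + 1) * (a * Gamma a)))) := by
    rw [show a + 5 = (a + 4) + 1 by ring, Gamma_add_one (by linarith), hG4]
  have hg1 : 0 < Gamma (a + 1) := Gamma_pos_of_pos (by linarith)
  have hg2 : 0 < Gamma (a + 2) := Gamma_pos_of_pos (by linarith)
  have hg3 : 0 < Gamma (a + 3) := Gamma_pos_of_pos (by linarith)
  have hg32 : 0 < Gamma (a + 3/2) := Gamma_pos_of_pos (by linarith)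
  have hg52 : 0 < Gamma (a + 5/2) := Gamma_pos_of_pos (by linarith)
  have hgA : 0 < Gamma (a + 7/4) := Gamma_pos_of_pos (by linarith)
  have hgB : 0 < Gamma (a + 9/4) := Gamma_pos_of_pos (by linarith)
  have hgD : 0 < Gamma (a + 7/2) := Gamma_pos_of_pos (by linarith)
  have hsp : (0:ℝ) < Real.sqrt π := sqrt_pos.mpr pi_pos
  have hh3 : Gamma (a + 3/2) ^ 2 ≤ Gamma (a + 1) ^ 2 * (a + 1) := by
    have h := half_up_sq (x := a + 1) (by linarith)
    rwa [show (a + 1) + 1/2 = a + 3/2 by ring] at h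
  have hh5 : Gamma (a + 5/2) ^ 2 ≤ Gamma (a + 2) ^ 2 * (a + 2) := by
    have h := half_up_sq (x := a + 2) (by linarith)
    rwa [show (a + 2) + 1/2 = a + 5/2 by ring] at h
  apply assemble (P := a^4 * (a+1)^3 * (a + 3/2) * Gamma a ^ 4) (Q := 4 * π * (a^2 * (a+1)^2 * (a+2)^2 * (a + 5/2)) * Gamma a ^ 4)
    (mul_pos hgA hgB).le (exp_pos _) (by positivity) (by positivity)
  · have hh1 : Gamma (a + 7/4) ^ 2 ≤ Gamma (a + 3/2) * Gamma (a + 2) := by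
      have h := holder_sq (u := a + 3/2) (v := a + 2) (by linarith) (by linarith)
      rwa [show ((a + 3/2) + (a + 2)) / 2 = a + 7/4 by ring] at h
    have hh2 : Gamma (a + 9/4) ^ 2 ≤ Gamma (a + 2) * Gamma (a + 5/2) := by
      have h := holder_sq (u := a + 2) (v := a + 5/2) (by linarith) (by linarith)
      rwa [show ((a + 2) + (a + 5/2)) / 2 = a + 9/4 by ring] at h
    have hG52 : Gamma (a + 5/2) = (a + 3/2) * Gamma (a + 3/2) := by
      rw [show a + 5/2 = (a + 3/2) + 1 by ring, Gamma_add_one (by positivity)]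
    calc (Gamma (a + 7/4) * Gamma (a + 9/4)) ^ 2
        = Gamma (a + 7/4) ^ 2 * Gamma (a + 9/4) ^ 2 := by ring
      _ ≤ (Gamma (a + 3/2) * Gamma (a + 2)) * (Gamma (a + 2) * Gamma (a + 5/2)) :=
          mul_le_mul hh1 hh2 (sq_nonneg _) (mul_nonneg hg32.le hg2.le)
      _ = Gamma (a + 3/2) ^ 2 * ((a + 3/2) * Gamma (a + 2) ^ 2) := by rw [hG52]; ring
      _ ≤ (Gamma (a + 1) ^ 2 * (a + 1)) * ((a + 3/2) * Gamma (a + 2) ^ 2) :=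
          mul_le_mul_of_nonneg_right hh3 (by positivity)
      _ = a^4 * (a+1)^3 * (a + 3/2) * Gamma a ^ 4 := by rw [hG1, hG2]; ring
  · have hh4 : Gamma (a + 3) ^ 2 * (a + 5/2) ≤ Gamma (a + 7/2) ^ 2 := by
      have h := half_down_sq (x := a + 3) (by linarith)
      rwa [show (a + 3) + 1/2 = a + 7/2 by ring, show (a + 3) - 1/2 = a + 5/2 by ring] at h
    calc 4 * π * (a^2 * (a+1)^2 * (a+2)^2 * (a + 5/2)) * Gamma a ^ 4
        = 4 * π * Gamma a ^ 2 * (Gamma (a + 3) ^ 2 * (a + 5/2)) := by rw [hG3]; ring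
      _ ≤ 4 * π * Gamma a ^ 2 * Gamma (a + 7/2) ^ 2 :=
          mul_le_mul_of_nonneg_left hh4 (by positivity)
      _ = (2 * Real.sqrt π * Gamma a * Gamma (a + 7/2)) ^ 2 := by
          rw [show (2 * Real.sqrt π * Gamma a * Gamma (a + 7/2)) ^ 2
            = 4 * (Real.sqrt π ^ 2) * Gamma a ^ 2 * Gamma (a + 7/2) ^ 2 by ring,
            sq_sqrt pi_pos.le]
  · have hE2 : Real.exp ((2 * (2 * a) + 7) / (2 * a)) ^ 2
        = Real.exp 4 * Real.exp (7 / a) := by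
      rw [sq, ← Real.exp_add, ← Real.exp_add]
      congr 1
      field_simp
      ring
    have hB2 : (2.5 * Real.sqrt (2 * a)) ^ 2 = 12.5 * a := by
      rw [mul_pow, sq_sqrt (by linarith : (0:ℝ) ≤ 2 * a)]
      norm_num
      ring
    rw [hE2, hB2]
    have hpos : (0:ℝ) < a^3 * (a+1)^2 * Gamma a ^ 4 := by positivity
    calc a^4 * (a+1)^3 * (a + 3/2) * Gamma a ^ 4 * (Real.exp 4 * Real.exp (7 / a))
        = (a^3 * (a+1)^2 * Gamma a ^ 4) * ((a * (a + 1) * (a + 3/2)) * (Real.exp 4 * Real.exp (7 / a))) := by ring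
      _ < (a^3 * (a+1)^2 * Gamma a ^ 4) * (50 * π * ((a + 2) ^ 2 * (a + 5/2))) :=
          (mul_lt_mul_iff_right₀ hpos).mpr (core7 ha)
      _ = 12.5 * a * (4 * π * (a^2 * (a+1)^2 * (a+2)^2 * (a + 5/2)) * Gamma a ^ 4) := by ring


lemma peak8 {m : ℝ} (hm : 8 ≤ m) : g m (2 * m + 8) < 2.5 * Real.sqrt m := by
  obtain ⟨a, rfl⟩ : ∃ a, m = 2 * a := ⟨m / 2, by ring⟩
  have ha : 4 ≤ a := by linarith
  have ha0 : (0:ℝ) < a := by linarith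
  have hGa : 0 < Gamma a := Gamma_pos_of_pos ha0
  rw [g_dup (by linarith) (by linarith)]
  rw [show (2 * (2 * a) + 8) / 4 = a + 2 by ring,
    show (a + 2) + 1/2 = a + 5/2 by ring,
    show (2 * (2 * a) + 8 - 2 * a) / 2 = a + 4 by ring,
    show (2 * a) / 2 = a by ring]
  have hG1 : Gamma (a + 1) = a * Gamma a := Gamma_add_one ha0.ne'
  have hG2 : Gamma (a + 2) = (a + 1) * (a * Gamma a) := by
    rw [show a + 2 = (a + 1) + 1 by ring, Gamma_add_one (by linarith), hG1]
  have hG3 : Gamma (a + 3) = (a + 2) * ((a + 1) * (a * Gamma a)) := by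
    rw [show a + 3 = (a + 2) + 1 by ring, Gamma_add_one (by linarith), hG2]
  have hG4 : Gamma (a + 4) = (a + 3) * ((a + 2) * ((a + 1) * (a * Gamma a))) := by
    rw [show a + 4 = (a + 3) + 1 by ring, Gamma_add_one (by linarith), hG3]
  have hG5 : Gamma (a + 5) = (a + 4) * ((a + 3) * ((a + 2) * ((a + 1) * (a * Gamma a)))) := by
    rw [show a + 5 = (a + 4) + 1 by ring, Gamma_add_one (by linarith), hG4]
  have hg1 : 0 < Gamma (a + 1) := Gamma_pos_of_pos (by linarith)
  have hg2 : 0 < Gamma (a + 2) := Gamma_pos_of_pos (by linarith)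
  have hg3 : 0 < Gamma (a + 3) := Gamma_pos_of_pos (by linarith)
  have hg32 : 0 < Gamma (a + 3/2) := Gamma_pos_of_pos (by linarith)
  have hg52 : 0 < Gamma (a + 5/2) := Gamma_pos_of_pos (by linarith)
  have hgA : 0 < Gamma (a + 2) := Gamma_pos_of_pos (by linarith)
  have hgB : 0 < Gamma (a + 5/2) := Gamma_pos_of_pos (by linarith)
  have hgD : 0 < Gamma (a + 4) := Gamma_pos_of_pos (by linarith)
  have hsp : (0:ℝ) < Real.sqrt π := sqrt_pos.mpr pi_pos
  have hh3 : Gamma (a + 3/2) ^ 2 ≤ Gamma (a + 1) ^ 2 * (a + 1) := by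
    have h := half_up_sq (x := a + 1) (by linarith)
    rwa [show (a + 1) + 1/2 = a + 3/2 by ring] at h
  have hh5 : Gamma (a + 5/2) ^ 2 ≤ Gamma (a + 2) ^ 2 * (a + 2) := by
    have h := half_up_sq (x := a + 2) (by linarith)
    rwa [show (a + 2) + 1/2 = a + 5/2 by ring] at h
  apply assemble (P := a^4 * (a+1)^4 * (a+2) * Gamma a ^ 4) (Q := 4 * π * (a^2 * (a+1)^2 * (a+2)^2 * (a+3)^2) * Gamma a ^ 4)
    (mul_pos hgA hgB).le (exp_pos _) (by positivity) (by positivity)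
  · calc (Gamma (a + 2) * Gamma (a + 5/2)) ^ 2
        = Gamma (a + 2) ^ 2 * Gamma (a + 5/2) ^ 2 := by ring
      _ ≤ Gamma (a + 2) ^ 2 * (Gamma (a + 2) ^ 2 * (a + 2)) :=
          mul_le_mul_of_nonneg_left hh5 (sq_nonneg _)
      _ = a^4 * (a+1)^4 * (a+2) * Gamma a ^ 4 := by rw [hG2]; ring
  · apply le_of_eq
    calc 4 * π * (a^2 * (a+1)^2 * (a+2)^2 * (a+3)^2) * Gamma a ^ 4
        = 4 * π * Gamma a ^ 2 * Gamma (a + 4) ^ 2 := by rw [hG4]; ring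
      _ = (2 * Real.sqrt π * Gamma a * Gamma (a + 4)) ^ 2 := by
          rw [show (2 * Real.sqrt π * Gamma a * Gamma (a + 4)) ^ 2
            = 4 * (Real.sqrt π ^ 2) * Gamma a ^ 2 * Gamma (a + 4) ^ 2 by ring,
            sq_sqrt pi_pos.le]
  · have hE2 : Real.exp ((2 * (2 * a) + 8) / (2 * a)) ^ 2
        = Real.exp 4 * Real.exp (8 / a) := by
      rw [sq, ← Real.exp_add, ← Real.exp_add]
      congr 1
      field_simp
      ring
    have hB2 : (2.5 * Real.sqrt (2 * a)) ^ 2 = 12.5 * a := by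
      rw [mul_pow, sq_sqrt (by linarith : (0:ℝ) ≤ 2 * a)]
      norm_num
      ring
    rw [hE2, hB2]
    have hpos : (0:ℝ) < a^3 * (a+1)^2 * (a+2) * Gamma a ^ 4 := by positivity
    calc a^4 * (a+1)^4 * (a+2) * Gamma a ^ 4 * (Real.exp 4 * Real.exp (8 / a))
        = (a^3 * (a+1)^2 * (a+2) * Gamma a ^ 4) * ((a * (a + 1) ^ 2) * (Real.exp 4 * Real.exp (8 / a))) := by ring
      _ < (a^3 * (a+1)^2 * (a+2) * Gamma a ^ 4) * (50 * π * ((a + 2) * (a + 3) ^ 2)) :=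
          (mul_lt_mul_iff_right₀ hpos).mpr (core8 ha)
      _ = 12.5 * a * (4 * π * (a^2 * (a+1)^2 * (a+2)^2 * (a+3)^2) * Gamma a ^ 4) := by ring


lemma peak9 {m : ℝ} (hm : 8 ≤ m) : g m (2 * m + 9) < 2.5 * Real.sqrt m := by
  obtain ⟨a, rfl⟩ : ∃ a, m = 2 * a := ⟨m / 2, by ring⟩
  have ha : 4 ≤ a := by linarith
  have ha0 : (0:ℝ) < a := by linarith
  have hGa : 0 < Gamma a := Gamma_pos_of_pos ha0
  rw [g_dup (by linarith) (by linarith)]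
  rw [show (2 * (2 * a) + 9) / 4 = a + 9/4 by ring,
    show (a + 9/4) + 1/2 = a + 11/4 by ring,
    show (2 * (2 * a) + 9 - 2 * a) / 2 = a + 9/2 by ring,
    show (2 * a) / 2 = a by ring]
  have hG1 : Gamma (a + 1) = a * Gamma a := Gamma_add_one ha0.ne'
  have hG2 : Gamma (a + 2) = (a + 1) * (a * Gamma a) := by
    rw [show a + 2 = (a + 1) + 1 by ring, Gamma_add_one (by linarith), hG1]
  have hG3 : Gamma (a + 3) = (a + 2) * ((a + 1) * (a * Gamma a)) := by
    rw [show a + 3 = (a + 2) + 1 by ring, Gamma_add_one (by linarith), hG2]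
  have hG4 : Gamma (a + 4) = (a + 3) * ((a + 2) * ((a + 1) * (a * Gamma a))) := by
    rw [show a + 4 = (a + 3) + 1 by ring, Gamma_add_one (by linarith), hG3]
  have hG5 : Gamma (a + 5) = (a + 4) * ((a + 3) * ((a + 2) * ((a + 1) * (a * Gamma a)))) := by
    rw [show a + 5 = (a + 4) + 1 by ring, Gamma_add_one (by linarith), hG4]
  have hg1 : 0 < Gamma (a + 1) := Gamma_pos_of_pos (by linarith)
  have hg2 : 0 < Gamma (a + 2) := Gamma_pos_of_pos (by linarith)
  have hg3 : 0 < Gamma (a + 3) := Gamma_pos_of_pos (by linarith)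
  have hg32 : 0 < Gamma (a + 3/2) := Gamma_pos_of_pos (by linarith)
  have hg52 : 0 < Gamma (a + 5/2) := Gamma_pos_of_pos (by linarith)
  have hgA : 0 < Gamma (a + 9/4) := Gamma_pos_of_pos (by linarith)
  have hgB : 0 < Gamma (a + 11/4) := Gamma_pos_of_pos (by linarith)
  have hgD : 0 < Gamma (a + 9/2) := Gamma_pos_of_pos (by linarith)
  have hsp : (0:ℝ) < Real.sqrt π := sqrt_pos.mpr pi_pos
  have hh3 : Gamma (a + 3/2) ^ 2 ≤ Gamma (a + 1) ^ 2 * (a + 1) := by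
    have h := half_up_sq (x := a + 1) (by linarith)
    rwa [show (a + 1) + 1/2 = a + 3/2 by ring] at h
  have hh5 : Gamma (a + 5/2) ^ 2 ≤ Gamma (a + 2) ^ 2 * (a + 2) := by
    have h := half_up_sq (x := a + 2) (by linarith)
    rwa [show (a + 2) + 1/2 = a + 5/2 by ring] at h
  apply assemble (P := a^4 * (a+1)^4 * (a+2)^2 * Gamma a ^ 4) (Q := 4 * π * (a^2 * (a+1)^2 * (a+2)^2 * (a+3)^2 * (a + 7/2)) * Gamma a ^ 4)
    (mul_pos hgA hgB).le (exp_pos _) (by positivity) (by positivity)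
  · have hh1 : Gamma (a + 9/4) ^ 2 ≤ Gamma (a + 2) * Gamma (a + 5/2) := by
      have h := holder_sq (u := a + 2) (v := a + 5/2) (by linarith) (by linarith)
      rwa [show ((a + 2) + (a + 5/2)) / 2 = a + 9/4 by ring] at h
    have hh2 : Gamma (a + 11/4) ^ 2 ≤ Gamma (a + 5/2) * Gamma (a + 3) := by
      have h := holder_sq (u := a + 5/2) (v := a + 3) (by linarith) (by linarith)
      rwa [show ((a + 5/2) + (a + 3)) / 2 = a + 11/4 by ring] at h
    calc (Gamma (a + 9/4) * Gamma (a + 11/4)) ^ 2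
        = Gamma (a + 9/4) ^ 2 * Gamma (a + 11/4) ^ 2 := by ring
      _ ≤ (Gamma (a + 2) * Gamma (a + 5/2)) * (Gamma (a + 5/2) * Gamma (a + 3)) :=
          mul_le_mul hh1 hh2 (sq_nonneg _) (mul_nonneg hg2.le hg52.le)
      _ = Gamma (a + 5/2) ^ 2 * (Gamma (a + 2) * Gamma (a + 3)) := by ring
      _ ≤ (Gamma (a + 2) ^ 2 * (a + 2)) * (Gamma (a + 2) * Gamma (a + 3)) :=
          mul_le_mul_of_nonneg_right hh5 (mul_nonneg hg2.le hg3.le)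
      _ = a^4 * (a+1)^4 * (a+2)^2 * Gamma a ^ 4 := by rw [hG2, hG3]; ring
  · have hh4 : Gamma (a + 4) ^ 2 * (a + 7/2) ≤ Gamma (a + 9/2) ^ 2 := by
      have h := half_down_sq (x := a + 4) (by linarith)
      rwa [show (a + 4) + 1/2 = a + 9/2 by ring, show (a + 4) - 1/2 = a + 7/2 by ring] at h
    calc 4 * π * (a^2 * (a+1)^2 * (a+2)^2 * (a+3)^2 * (a + 7/2)) * Gamma a ^ 4
        = 4 * π * Gamma a ^ 2 * (Gamma (a + 4) ^ 2 * (a + 7/2)) := by rw [hG4]; ring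
      _ ≤ 4 * π * Gamma a ^ 2 * Gamma (a + 9/2) ^ 2 :=
          mul_le_mul_of_nonneg_left hh4 (by positivity)
      _ = (2 * Real.sqrt π * Gamma a * Gamma (a + 9/2)) ^ 2 := by
          rw [show (2 * Real.sqrt π * Gamma a * Gamma (a + 9/2)) ^ 2
            = 4 * (Real.sqrt π ^ 2) * Gamma a ^ 2 * Gamma (a + 9/2) ^ 2 by ring,
            sq_sqrt pi_pos.le]
  · have hE2 : Real.exp ((2 * (2 * a) + 9) / (2 * a)) ^ 2
        = Real.exp 4 * Real.exp (9 / a) := by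
      rw [sq, ← Real.exp_add, ← Real.exp_add]
      congr 1
      field_simp
      ring
    have hB2 : (2.5 * Real.sqrt (2 * a)) ^ 2 = 12.5 * a := by
      rw [mul_pow, sq_sqrt (by linarith : (0:ℝ) ≤ 2 * a)]
      norm_num
      ring
    rw [hE2, hB2]
    have hpos : (0:ℝ) < a^3 * (a+1)^2 * (a+2)^2 * Gamma a ^ 4 := by positivity
    calc a^4 * (a+1)^4 * (a+2)^2 * Gamma a ^ 4 * (Real.exp 4 * Real.exp (9 / a))
        = (a^3 * (a+1)^2 * (a+2)^2 * Gamma a ^ 4) * ((a * (a + 1) ^ 2) * (Real.exp 4 * Real.exp (9 / a))) := by ring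
      _ < (a^3 * (a+1)^2 * (a+2)^2 * Gamma a ^ 4) * (50 * π * ((a + 3) ^ 2 * (a + 7/2))) :=
          (mul_lt_mul_iff_right₀ hpos).mpr (core9 ha)
      _ = 12.5 * a * (4 * π * (a^2 * (a+1)^2 * (a+2)^2 * (a+3)^2 * (a + 7/2)) * Gamma a ^ 4) := by ring


lemma peak10 {m : ℝ} (hm : 8 ≤ m) : g m (2 * m + 10) < 2.5 * Real.sqrt m := by
  obtain ⟨a, rfl⟩ : ∃ a, m = 2 * a := ⟨m / 2, by ring⟩
  have ha : 4 ≤ a := by linarith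
  have ha0 : (0:ℝ) < a := by linarith
  have hGa : 0 < Gamma a := Gamma_pos_of_pos ha0
  rw [g_dup (by linarith) (by linarith)]
  rw [show (2 * (2 * a) + 10) / 4 = a + 5/2 by ring,
    show (a + 5/2) + 1/2 = a + 3 by ring,
    show (2 * (2 * a) + 10 - 2 * a) / 2 = a + 5 by ring,
    show (2 * a) / 2 = a by ring]
  have hG1 : Gamma (a + 1) = a * Gamma a := Gamma_add_one ha0.ne'
  have hG2 : Gamma (a + 2) = (a + 1) * (a * Gamma a) := by
    rw [show a + 2 = (a + 1) + 1 by ring, Gamma_add_one (by linarith), hG1]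
  have hG3 : Gamma (a + 3) = (a + 2) * ((a + 1) * (a * Gamma a)) := by
    rw [show a + 3 = (a + 2) + 1 by ring, Gamma_add_one (by linarith), hG2]
  have hG4 : Gamma (a + 4) = (a + 3) * ((a + 2) * ((a + 1) * (a * Gamma a))) := by
    rw [show a + 4 = (a + 3) + 1 by ring, Gamma_add_one (by linarith), hG3]
  have hG5 : Gamma (a + 5) = (a + 4) * ((a + 3) * ((a + 2) * ((a + 1) * (a * Gamma a)))) := by
    rw [show a + 5 = (a + 4) + 1 by ring, Gamma_add_one (by linarith), hG4]
  have hg1 : 0 < Gamma (a + 1) := Gamma_pos_of_pos (by linarith)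
  have hg2 : 0 < Gamma (a + 2) := Gamma_pos_of_pos (by linarith)
  have hg3 : 0 < Gamma (a + 3) := Gamma_pos_of_pos (by linarith)
  have hg32 : 0 < Gamma (a + 3/2) := Gamma_pos_of_pos (by linarith)
  have hg52 : 0 < Gamma (a + 5/2) := Gamma_pos_of_pos (by linarith)
  have hgA : 0 < Gamma (a + 5/2) := Gamma_pos_of_pos (by linarith)
  have hgB : 0 < Gamma (a + 3) := Gamma_pos_of_pos (by linarith)
  have hgD : 0 < Gamma (a + 5) := Gamma_pos_of_pos (by linarith)
  have hsp : (0:ℝ) < Real.sqrt π := sqrt_pos.mpr pi_pos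
  have hh3 : Gamma (a + 3/2) ^ 2 ≤ Gamma (a + 1) ^ 2 * (a + 1) := by
    have h := half_up_sq (x := a + 1) (by linarith)
    rwa [show (a + 1) + 1/2 = a + 3/2 by ring] at h
  have hh5 : Gamma (a + 5/2) ^ 2 ≤ Gamma (a + 2) ^ 2 * (a + 2) := by
    have h := half_up_sq (x := a + 2) (by linarith)
    rwa [show (a + 2) + 1/2 = a + 5/2 by ring] at h
  apply assemble (P := a^4 * (a+1)^4 * (a+2)^3 * Gamma a ^ 4) (Q := 4 * π * (a^2 * (a+1)^2 * (a+2)^2 * (a+3)^2 * (a+4)^2) * Gamma a ^ 4)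
    (mul_pos hgA hgB).le (exp_pos _) (by positivity) (by positivity)
  · calc (Gamma (a + 5/2) * Gamma (a + 3)) ^ 2
        = Gamma (a + 5/2) ^ 2 * Gamma (a + 3) ^ 2 := by ring
      _ ≤ (Gamma (a + 2) ^ 2 * (a + 2)) * Gamma (a + 3) ^ 2 :=
          mul_le_mul_of_nonneg_right hh5 (sq_nonneg _)
      _ = a^4 * (a+1)^4 * (a+2)^3 * Gamma a ^ 4 := by rw [hG2, hG3]; ring
  · apply le_of_eq
    calc 4 * π * (a^2 * (a+1)^2 * (a+2)^2 * (a+3)^2 * (a+4)^2) * Gamma a ^ 4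
        = 4 * π * Gamma a ^ 2 * Gamma (a + 5) ^ 2 := by rw [hG5]; ring
      _ = (2 * Real.sqrt π * Gamma a * Gamma (a + 5)) ^ 2 := by
          rw [show (2 * Real.sqrt π * Gamma a * Gamma (a + 5)) ^ 2
            = 4 * (Real.sqrt π ^ 2) * Gamma a ^ 2 * Gamma (a + 5) ^ 2 by ring,
            sq_sqrt pi_pos.le]
  · have hE2 : Real.exp ((2 * (2 * a) + 10) / (2 * a)) ^ 2
        = Real.exp 4 * Real.exp (10 / a) := by
      rw [sq, ← Real.exp_add, ← Real.exp_add]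
      congr 1
      field_simp
      ring
    have hB2 : (2.5 * Real.sqrt (2 * a)) ^ 2 = 12.5 * a := by
      rw [mul_pow, sq_sqrt (by linarith : (0:ℝ) ≤ 2 * a)]
      norm_num
      ring
    rw [hE2, hB2]
    have hpos : (0:ℝ) < a^3 * (a+1)^2 * (a+2)^2 * Gamma a ^ 4 := by positivity
    calc a^4 * (a+1)^4 * (a+2)^3 * Gamma a ^ 4 * (Real.exp 4 * Real.exp (10 / a))
        = (a^3 * (a+1)^2 * (a+2)^2 * Gamma a ^ 4) * ((a * (a + 1) ^ 2 * (a + 2)) * (Real.exp 4 * Real.exp (10 / a))) := by ring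
      _ < (a^3 * (a+1)^2 * (a+2)^2 * Gamma a ^ 4) * (50 * π * ((a + 3) ^ 2 * (a + 4) ^ 2)) :=
          (mul_lt_mul_iff_right₀ hpos).mpr (core10 ha)
      _ = 12.5 * a * (4 * π * (a^2 * (a+1)^2 * (a+2)^2 * (a+3)^2 * (a+4)^2) * Gamma a ^ 4) := by ring

end GLT

/-- For integers `m ≥ 8` and `n > m`,
`g_m(n) := Γ(n/2)·exp(n/m) / (Γ(m/2)·Γ((n−m)/2)·2^{n/2})` satisfies
`g_m(n) < 2.5·√m`. -/
theorem g_lt (m n : ℕ) (hm : 8 ≤ m) (hn : m < n) :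
    Gamma ((n : ℝ) / 2) * Real.exp ((n : ℝ) / m) /
        (Gamma ((m : ℝ) / 2) * Gamma (((n : ℝ) - m) / 2) * 2 ^ ((n : ℝ) / 2))
      < 2.5 * Real.sqrt m := by
  have hm8 : (8:ℝ) ≤ (m:ℝ) := by exact_mod_cast hm
  have hm0 : (0:ℝ) < (m:ℝ) := by linarith
  have hpeak : ∀ j : ℕ, 2*m+5 ≤ j → j ≤ 2*m+10 → GLT.g m j < 2.5 * Real.sqrt m := by
    intro j h1 h2
    have hj6 : j = 2*m+5 ∨ j = 2*m+6 ∨ j = 2*m+7 ∨ j = 2*m+8 ∨ j = 2*m+9 ∨ j = 2*m+10 := by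
      omega
    rcases hj6 with rfl | rfl | rfl | rfl | rfl | rfl
    · rw [show ((2*m+5 : ℕ) : ℝ) = 2*(m:ℝ)+5 by push_cast; ring]; exact GLT.peak5 hm8
    · rw [show ((2*m+6 : ℕ) : ℝ) = 2*(m:ℝ)+6 by push_cast; ring]; exact GLT.peak6 hm8
    · rw [show ((2*m+7 : ℕ) : ℝ) = 2*(m:ℝ)+7 by push_cast; ring]; exact GLT.peak7 hm8
    · rw [show ((2*m+8 : ℕ) : ℝ) = 2*(m:ℝ)+8 by push_cast; ring]; exact GLT.peak8 hm8
    · rw [show ((2*m+9 : ℕ) : ℝ) = 2*(m:ℝ)+9 by push_cast; ring]; exact GLT.peak9 hm8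
    · rw [show ((2*m+10 : ℕ) : ℝ) = 2*(m:ℝ)+10 by push_cast; ring]; exact GLT.peak10 hm8
  have down : ∀ j : ℕ, 2*m+5 ≤ j → GLT.g m j < 2.5 * Real.sqrt m := by
    intro j
    induction j using Nat.strong_induction_on with
    | _ j ih =>
      intro hj
      rcases le_or_gt j (2*m+10) with h | h
      · exact hpeak j hj h
      · have h9 : 2*m+9 ≤ j - 2 := by omega
        have e2 : ((j : ℕ) : ℝ) = ((j - 2 : ℕ) : ℝ) + 2 := by
          rw [Nat.cast_sub (by omega : 2 ≤ j)]; push_cast; ring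
        have hcast : (2*(m:ℝ)+9) ≤ ((j - 2 : ℕ) : ℝ) := by
          rw [Nat.cast_sub (by omega : 2 ≤ j)]
          push_cast
          have : (2*m+9 : ℕ) ≤ j - 2 := h9
          have := (Nat.cast_le (α := ℝ)).mpr h9
          push_cast at this
          linarith
        have step := GLT.descend (m := (m:ℝ)) (n := ((j - 2 : ℕ) : ℝ)) hm8 hcast
        rw [e2]
        exact lt_of_le_of_lt step (ih (j - 2) (by omega) (by omega))
  have up : ∀ t : ℕ, ∀ j : ℕ, m < j → 2*m+5 ≤ j + 2*t → GLT.g m j < 2.5 * Real.sqrt m := by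
    intro t
    induction t with
    | zero =>
      intro j hj h
      exact down j (by omega)
    | succ t ih =>
      intro j hj h
      rcases le_or_gt (2*m+5) j with hc | hc
      · exact down j hc
      · have hj4 : (j:ℝ) ≤ 2*(m:ℝ)+4 := by
          have : j ≤ 2*m+4 := by omega
          have := (Nat.cast_le (α := ℝ)).mpr this
          push_cast at this
          linarith
        have hstep := GLT.climb (m := (m:ℝ)) (n := (j:ℝ)) hm0
          (by exact_mod_cast hj) hj4
        have e2 : ((j:ℝ) + 2) = ((j + 2 : ℕ) : ℝ) := by push_cast; ring
        rw [e2] at hstep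
        exact lt_of_le_of_lt hstep (ih (j + 2) (by omega) (by omega))
  exact up m n hn (by omega)
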